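/- Let $S$ be a subspace of $\mathbb{R}^d$, let $\x \in \mathbb{R}^d$ with $\|\x\|_2 \le 1$, and let $\v, \w \in \mathbb{R}^d$ with $\|\w\|_2 = 1$. Suppose $|\x^\top \v| \le a$, $\|\mathrm{proj}_S(\w)\|_2 \le b$, and $\x^\top(\v - \w) \ge \gamma$. Then $\gamma \le a + b + \sqrt{1 - \|\mathrm{proj}_S(\x)\|_2^2/\|\x\|_2^2}$. -/

import Mathlib

open InnerProductSpace

/-- Projection decomposition bound: if `‖x‖ ≤ 1`, `‖w‖ = 1`, `|xᵀv| ≤ a`,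
`‖proj_S w‖ ≤ b` and `xᵀ(v − w) ≥ γ`, then
`γ ≤ a + b + √(1 − ‖proj_S x‖²/‖x‖²)`. -/
theorem stmt_14 (d : ℕ) (S : Submodule ℝ (EuclideanSpace ℝ (Fin d)))
    (x v w : EuclideanSpace ℝ (Fin d)) (a b γ : ℝ)
    (hx : ‖x‖ ≤ 1) (hw : ‖w‖ = 1)
    (hxv : |(⟪x, v⟫_ℝ)| ≤ a)
    (hSw : ‖(S.orthogonalProjectionOnto w : EuclideanSpace ℝ (Fin d))‖ ≤ b)
    (hγ : γ ≤ ⟪x, v - w⟫_ℝ) :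
    γ ≤ a + b + Real.sqrt (1 -
      ‖(S.orthogonalProjectionOnto x : EuclideanSpace ℝ (Fin d))‖ ^ 2 / ‖x‖ ^ 2) := by
  set p : EuclideanSpace ℝ (Fin d) := (S.orthogonalProjectionOnto x : EuclideanSpace ℝ (Fin d))
  set q : EuclideanSpace ℝ (Fin d) := x - p
  have hqmem : q ∈ Sᗮ := Submodule.sub_starProjection_mem_orthogonal (K := S) x
  have hpmem : p ∈ S := (S.orthogonalProjectionOnto x).2
  have hpq : ⟪p, q⟫_ℝ = 0 := (Submodule.inner_right_of_mem_orthogonal hpmem hqmem)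
  -- Pythagorean
  have hxpq : x = p + q := by simp [q]
  have hpyth : ‖x‖ ^ 2 = ‖p‖ ^ 2 + ‖q‖ ^ 2 := by
    rw [hxpq]
    rw [@norm_add_sq_real]
    rw [hpq]; ring
  have hple : ‖p‖ ≤ ‖x‖ := by nlinarith [norm_nonneg q, norm_nonneg p, norm_nonneg x]
  -- bound ‖q‖ ≤ sqrt(1 - ‖p‖²/‖x‖²)
  have hq_bound : ‖q‖ ≤ Real.sqrt (1 - ‖p‖ ^ 2 / ‖x‖ ^ 2) := by
    rcases eq_or_ne x 0 with hx0 | hx0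
    · have hp0 : p = 0 := by simp [p, hx0]
      have hq0 : q = 0 := by simp [q, hx0, hp0]
      simp [hq0, hp0, hx0]
    · have hxpos : (0:ℝ) < ‖x‖ ^ 2 := pow_pos (norm_pos_iff.mpr hx0) 2
      have h1 : ‖q‖ ^ 2 ≤ 1 - ‖p‖ ^ 2 / ‖x‖ ^ 2 := by
        have : ‖q‖ ^ 2 = ‖x‖ ^ 2 * (1 - ‖p‖ ^ 2 / ‖x‖ ^ 2) := by
          field_simp; linarith
        rw [this]
        have hfac : 0 ≤ 1 - ‖p‖ ^ 2 / ‖x‖ ^ 2 := by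
          rw [sub_nonneg, div_le_one hxpos]
          nlinarith
        have hx2 : ‖x‖ ^ 2 ≤ 1 := by nlinarith [norm_nonneg x]
        exact mul_le_of_le_one_left hfac hx2
      calc ‖q‖ = Real.sqrt (‖q‖ ^ 2) := by
              rw [Real.sqrt_sq (norm_nonneg q)]
        _ ≤ Real.sqrt (1 - ‖p‖ ^ 2 / ‖x‖ ^ 2) := Real.sqrt_le_sqrt h1
  -- ⟪p, w⟫ = ⟪p, proj_S w⟫
  have hpw : ⟪p, w⟫_ℝ = ⟪p, (S.orthogonalProjectionOnto w : EuclideanSpace ℝ (Fin d))⟫_ℝ := by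
    have h0 : ⟪p, w - (S.orthogonalProjectionOnto w : EuclideanSpace ℝ (Fin d))⟫_ℝ = 0 :=
      Submodule.inner_right_of_mem_orthogonal hpmem
        (Submodule.sub_starProjection_mem_orthogonal (K := S) w)
    rw [inner_sub_right] at h0
    linarith
  have hpw_bound : |⟪p, w⟫_ℝ| ≤ b := by
    rw [hpw]
    calc |⟪p, (S.orthogonalProjectionOnto w : EuclideanSpace ℝ (Fin d))⟫_ℝ|
        ≤ ‖p‖ * ‖(S.orthogonalProjectionOnto w : EuclideanSpace ℝ (Fin d))‖ :=
          abs_real_inner_le_norm _ _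
      _ ≤ 1 * b := by
          apply mul_le_mul (le_trans hple hx) hSw (norm_nonneg _) zero_le_one
      _ = b := one_mul b
  have hqw_bound : ⟪q, w⟫_ℝ ≤ Real.sqrt (1 - ‖p‖ ^ 2 / ‖x‖ ^ 2) := by
    calc ⟪q, w⟫_ℝ ≤ |⟪q, w⟫_ℝ| := le_abs_self _
      _ ≤ ‖q‖ * ‖w‖ := abs_real_inner_le_norm _ _
      _ = ‖q‖ := by rw [hw, mul_one]
      _ ≤ _ := hq_bound
  have hsplit : ⟪x, w⟫_ℝ = ⟪p, w⟫_ℝ + ⟪q, w⟫_ℝ := by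
    rw [hxpq, inner_add_left]
  have h1 : ⟪x, v - w⟫_ℝ = ⟪x, v⟫_ℝ - ⟪x, w⟫_ℝ := inner_sub_right _ _ _
  have h2 : -⟪p, w⟫_ℝ ≤ b := by
    have := neg_abs_le (⟪p, w⟫_ℝ); linarith
  have h3 : -⟪q, w⟫_ℝ ≤ Real.sqrt (1 - ‖p‖ ^ 2 / ‖x‖ ^ 2) := by
    have : ⟪-q, w⟫_ℝ ≤ |⟪-q, w⟫_ℝ| := le_abs_self _
    calc -⟪q, w⟫_ℝ = ⟪-q, w⟫_ℝ := by rw [inner_neg_left]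
      _ ≤ |⟪-q, w⟫_ℝ| := le_abs_self _
      _ ≤ ‖-q‖ * ‖w‖ := abs_real_inner_le_norm _ _
      _ = ‖q‖ := by rw [norm_neg, hw, mul_one]
      _ ≤ _ := hq_bound
  have h4 : ⟪x, v⟫_ℝ ≤ a := le_trans (le_abs_self _) hxv
  linarith
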